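/- Let G be a simple connected graph with n ≥ 2 vertices and m edges, and write a_k = d(G,k). Then the numbers b_k = d(μ(G),k) of unordered pairs of distinct vertices of the Mycielskian μ(G) at distance k satisfy: b_1 = 3m + n, b_2 = (n² + 3n)/2 + 3a_2, b_3 = n² − 2m − n + a_3 − 2a_2, b_4 = n(n−1)/2 − m − a_2 − a_3, and b_k = 0 for all k ≥ 5. -/

import Mathlib

open SimpleGraph Polynomial Finset

/-- The Mycielskian `μ(G)` of a simple graph `G`. Vertices `Sum.inl v` are the original
vertices `v_i`, vertices `Sum.inr (Sum.inl v)` are the shadow vertices `u_i`, and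
`Sum.inr (Sum.inr ())` is the apex vertex `w`.  Edges: the edges of `G`, the edges `w u_i`,
and the edges `u_i v_j`, `u_j v_i` for every edge `v_i v_j` of `G`. -/
def mycielskian {V : Type*} (G : SimpleGraph V) : SimpleGraph (V ⊕ V ⊕ Unit) :=
  SimpleGraph.fromRel (fun a b =>
    match a, b with
    | Sum.inl a, Sum.inl b => G.Adj a b
    | Sum.inl a, Sum.inr (Sum.inl b) => G.Adj a b
    | Sum.inr (Sum.inl _), Sum.inr (Sum.inr _) => True
    | _, _ => False)

/-- `distCount G k` is `d(G,k)`, the number of unordered pairs of distinct vertices of `G`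
whose graph distance is exactly `k`. -/
noncomputable def distCount {V : Type*} (G : SimpleGraph V) (k : ℕ) : ℕ :=
  Nat.card {e : Sym2 V // ¬ e.IsDiag ∧ Sym2.lift ⟨G.dist, fun _ _ => G.dist_comm⟩ e = k}

/-- The Hosoya polynomial `H(G,x) = Σ_{k=1}^{D(G)} d(G,k) x^k` (with rational coefficients). -/
noncomputable def hosoya {V : Type*} (G : SimpleGraph V) : Polynomial ℚ :=
  ∑ k ∈ Finset.Icc 1 G.diam, (distCount G k : ℚ) • Polynomial.X ^ k

/-- The Wiener index `W(G)`: the sum of distances over all unordered pairs of distinct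
vertices (the diagonal contributes `0`, so we may sum over ordered pairs and halve). -/
noncomputable def wiener {V : Type*} (G : SimpleGraph V) [Fintype V] : ℚ :=
  (∑ u : V, ∑ v : V, (G.dist u v : ℚ)) / 2

/-- The Hyper-Wiener index `WW(G) = (1/2) Σ_{{u,v}} (d(u,v)² + d(u,v))`. -/
noncomputable def hyperWiener {V : Type*} (G : SimpleGraph V) [Fintype V] : ℚ :=
  (∑ u : V, ∑ v : V, ((G.dist u v : ℚ) ^ 2 + (G.dist u v : ℚ))) / 4

/-- The TSZ index `TSZ(G) = (1/6) Σ_{{u,v}} d³ + (1/2) Σ_{{u,v}} d² + (1/3) Σ_{{u,v}} d`. -/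
noncomputable def tszIndex {V : Type*} (G : SimpleGraph V) [Fintype V] : ℚ :=
  (∑ u : V, ∑ v : V, (G.dist u v : ℚ) ^ 3) / 12
    + (∑ u : V, ∑ v : V, (G.dist u v : ℚ) ^ 2) / 4
    + (∑ u : V, ∑ v : V, (G.dist u v : ℚ)) / 6

/-- The Harary index `Har(G) = Σ_{{u,v}} 1/d(u,v)` (diagonal terms are `0⁻¹ = 0`). -/
noncomputable def harary {V : Type*} (G : SimpleGraph V) [Fintype V] : ℚ :=
  (∑ u : V, ∑ v : V, ((G.dist u v : ℚ))⁻¹) / 2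

/-- The closeness `C(G) = Σ_u Σ_{v ≠ u} 2^{-d(u,v)}` over ordered pairs of distinct vertices. -/
noncomputable def closeness {V : Type*} (G : SimpleGraph V) [Fintype V] : ℚ :=
  letI := Classical.decEq V
  ∑ u : V, ∑ v : V, if v = u then 0 else ((1 : ℚ) / 2) ^ (G.dist u v)

/-- `σ_{uv}`: the number of shortest paths (walks of length `dist u v`) from `u` to `v`. -/
noncomputable def numSP {V : Type*} (G : SimpleGraph V) (u v : V) : ℕ :=
  Nat.card {p : G.Walk u v // p.length = G.dist u v}

/-- `σ_{uv}(w)`: the number of shortest paths from `u` to `v` passing through `w`. -/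
noncomputable def numSPthrough {V : Type*} (G : SimpleGraph V) (w u v : V) : ℕ :=
  Nat.card {p : G.Walk u v // p.length = G.dist u v ∧ w ∈ p.support}

/-- The betweenness centrality `B_w = Σ_{{u,v}, u ≠ w ≠ v} σ_{uv}(w)/σ_{uv}` of a vertex `w`,
summed over unordered pairs of distinct vertices (ordered pairs, halved). -/
noncomputable def btwVertex {V : Type*} (G : SimpleGraph V) [Fintype V] (w : V) : ℚ :=
  letI := Classical.decEq V
  (∑ u : V, ∑ v : V,
    if u ≠ v ∧ u ≠ w ∧ v ≠ w then (numSPthrough G w u v : ℚ) / (numSP G u v) else 0) / 2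

/-- The betweenness centrality of a graph: `B⁻(G) = (1/N) Σ_w B_w`. -/
noncomputable def btw {V : Type*} (G : SimpleGraph V) [Fintype V] : ℚ :=
  (∑ w : V, btwVertex G w) / (Fintype.card V)

/-- The star graph `S_n`: center `0` joined to the `n` leaves `1, …, n`. -/
def starGraph (n : ℕ) : SimpleGraph (Fin (n + 1)) :=
  SimpleGraph.fromRel (fun a _ => a = 0)

/-- The join `G₁ ⊕ G₂` of two graphs on disjoint vertex sets: all edges of `G₁`, all edges
of `G₂`, and all edges between `V(G₁)` and `V(G₂)`. -/
def joinGraph {V₁ V₂ : Type*} (G₁ : SimpleGraph V₁) (G₂ : SimpleGraph V₂) :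
    SimpleGraph (V₁ ⊕ V₂) :=
  SimpleGraph.fromRel (fun a b =>
    match a, b with
    | Sum.inl a, Sum.inl b => G₁.Adj a b
    | Sum.inr a, Sum.inr b => G₂.Adj a b
    | Sum.inl _, Sum.inr _ => True
    | _, _ => False)


set_option linter.unusedSectionVars false


lemma nat_card_pairs_eq_sum {α : Type*} [Fintype α] (P : α → α → Prop)
    [∀ x y, Decidable (P x y)] :
    Nat.card {p : α × α // P p.1 p.2} = ∑ x, ∑ y, if P x y then 1 else 0 := by
  classical
  rw [Nat.card_eq_fintype_card, Fintype.card_subtype, Finset.card_filter,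
    Fintype.sum_prod_type]

lemma two_mul_sym2_card {α : Type*} [Fintype α] (f : α → α → ℕ)
    (hf : ∀ a b, f a b = f b a) (k : ℕ) :
    Nat.card {p : α × α // p.1 ≠ p.2 ∧ f p.1 p.2 = k}
      = 2 * Nat.card {e : Sym2 α // ¬ e.IsDiag ∧ Sym2.lift ⟨f, hf⟩ e = k} := by
  classical
  rw [Nat.card_eq_fintype_card, Nat.card_eq_fintype_card, Fintype.card_subtype,
    Fintype.card_subtype]
  rw [Finset.card_eq_sum_card_fiberwise (f := fun p : α × α => s(p.1, p.2))
    (t := univ.filter fun e : Sym2 α => ¬ e.IsDiag ∧ Sym2.lift ⟨f, hf⟩ e = k) ?_]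
  · refine (Finset.sum_congr rfl ?_).trans
      (by rw [Finset.sum_const, smul_eq_mul, mul_comm])
    intro e he
    induction e using Sym2.ind with
    | _ a b =>
      simp only [mem_filter, mem_univ, true_and, Sym2.mk_isDiag_iff, Sym2.lift_mk] at he
      obtain ⟨hab, hfab⟩ := he
      have hset : ((univ.filter fun p : α × α => p.1 ≠ p.2 ∧ f p.1 p.2 = k).filter
          (fun p => s(p.1, p.2) = s(a, b))) = {(a, b), (b, a)} := by
        ext ⟨x, y⟩
        simp only [mem_filter, mem_univ, true_and, mem_insert, mem_singleton,
          Sym2.eq_iff, Prod.mk.injEq]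
        constructor
        · rintro ⟨-, (⟨rfl, rfl⟩ | ⟨rfl, rfl⟩)⟩
          · exact Or.inl ⟨rfl, rfl⟩
          · exact Or.inr ⟨rfl, rfl⟩
        · rintro (⟨rfl, rfl⟩ | ⟨rfl, rfl⟩)
          · exact ⟨⟨hab, hfab⟩, Or.inl ⟨rfl, rfl⟩⟩
          · exact ⟨⟨Ne.symm hab, (hf x y).trans hfab⟩, Or.inr ⟨rfl, rfl⟩⟩
      rw [hset, Finset.card_pair (by simp [hab])]
  · rintro ⟨x, y⟩ hp
    simp only [mem_coe, mem_filter, mem_univ, true_and] at hp ⊢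
    exact ⟨by simpa [Sym2.mk_isDiag_iff] using hp.1, by simpa [Sym2.lift_mk] using hp.2⟩


namespace MycAux


variable {V : Type*}

abbrev wv : V ⊕ V ⊕ Unit := Sum.inr (Sum.inr ())

variable (G : SimpleGraph V)

lemma adj_ll {a b : V} : (mycielskian G).Adj (Sum.inl a) (Sum.inl b) ↔ G.Adj a b := by
  constructor
  · rintro ⟨-, h | h⟩
    · exact h
    · exact h.symm
  · intro h
    exact ⟨by simpa using h.ne, Or.inl h⟩

lemma adj_lr {a b : V} : (mycielskian G).Adj (Sum.inl a) (Sum.inr (Sum.inl b)) ↔ G.Adj a b := by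
  constructor
  · rintro ⟨-, h | h⟩
    · exact h
    · exact h.elim
  · intro h
    exact ⟨by simp, Or.inl h⟩

lemma adj_rl {a b : V} : (mycielskian G).Adj (Sum.inr (Sum.inl a)) (Sum.inl b) ↔ G.Adj b a := by
  constructor
  · rintro ⟨-, h | h⟩
    · exact h.elim
    · exact h
  · intro h
    exact ⟨by simp, Or.inr h⟩

lemma adj_rr {a b : V} : ¬ (mycielskian G).Adj (Sum.inr (Sum.inl a)) (Sum.inr (Sum.inl b)) := by
  rintro ⟨-, h | h⟩ <;> exact h.elim

lemma adj_uw (a : V) : (mycielskian G).Adj (Sum.inr (Sum.inl a)) wv :=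
  ⟨by simp, Or.inl trivial⟩

lemma adj_wu (a : V) : (mycielskian G).Adj wv (Sum.inr (Sum.inl a)) :=
  (adj_uw G a).symm

lemma not_adj_lw (a : V) : ¬ (mycielskian G).Adj (Sum.inl a) wv := by
  rintro ⟨-, h | h⟩ <;> exact h.elim

lemma exists_adj [Fintype V] (hc : G.Connected) (h2 : 2 ≤ Fintype.card V) (a : V) :
    ∃ b, G.Adj a b := by
  obtain ⟨b, hb⟩ := Fintype.exists_ne_of_one_lt_card (by omega) a
  obtain ⟨p⟩ := hc a b
  cases p with
  | nil => exact absurd rfl hb.symm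
  | cons h _ => exact ⟨_, h⟩

def liftWalk : ∀ {a b : V}, G.Walk a b → (mycielskian G).Walk (Sum.inl a) (Sum.inl b)
  | _, _, Walk.nil => Walk.nil
  | _, _, Walk.cons h p => Walk.cons ((adj_ll G).mpr h) (liftWalk p)

lemma liftWalk_length {a b : V} (p : G.Walk a b) : (liftWalk G p).length = p.length := by
  induction p with
  | nil => rfl
  | cons h p ih => simp [liftWalk, ih]

lemma exists_mixwalk {a b : V} (p : G.Walk a b) (hnn : p.length ≠ 0) :
    ∃ q : (mycielskian G).Walk (Sum.inr (Sum.inl a)) (Sum.inl b), q.length = p.length := by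
  cases p with
  | nil => simp at hnn
  | cons h p' =>
      exact ⟨Walk.cons ((adj_rl G).mpr h.symm) (liftWalk G p'),
        by simp [liftWalk_length]⟩

lemma myc_connected [Fintype V] (hc : G.Connected) (h2 : 2 ≤ Fintype.card V) :
    (mycielskian G).Connected := by
  rw [connected_iff]
  refine ⟨?_, ⟨wv⟩⟩
  have key : ∀ x, (mycielskian G).Reachable x wv := by
    rintro (a | a | u)
    · obtain ⟨b, hb⟩ := exists_adj G hc h2 a
      exact ((adj_lr G).mpr hb).reachable.trans (adj_uw G b).reachable
    · exact (adj_uw G a).reachable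
    · exact Reachable.refl _
  intro x y
  exact (key x).trans (key y).symm



lemma proj_walk : ∀ {x y : V ⊕ V ⊕ Unit} (p : (mycielskian G).Walk x y),
    wv ∉ p.support → ∀ {a b : V},
    (x = Sum.inl a ∨ x = Sum.inr (Sum.inl a)) →
    (y = Sum.inl b ∨ y = Sum.inr (Sum.inl b)) →
    ∃ q : G.Walk a b, q.length = p.length := by
  intro x y p
  induction p with
  | nil =>
    intro _ a b hx hy
    have hab : a = b := by rcases hx with rfl | rfl <;> rcases hy with h | h <;> simp_all
    subst hab
    exact ⟨Walk.nil, rfl⟩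
  | @cons u v z h p ih =>
    intro hw a b hx hy
    rw [Walk.support_cons] at hw
    have hwp : wv ∉ p.support := fun e => hw (List.mem_cons_of_mem _ e)
    have hv : (∃ c, v = Sum.inl c) ∨ (∃ c, v = Sum.inr (Sum.inl c)) := by
      rcases v with c | c | u'
      · exact Or.inl ⟨c, rfl⟩
      · exact Or.inr ⟨c, rfl⟩
      · exact absurd (by cases u'; exact Walk.start_mem_support p) hwp
    rcases hv with ⟨c, rfl⟩ | ⟨c, rfl⟩
    · obtain ⟨q, hq⟩ := ih hwp (Or.inl rfl) hy
      have hadj : G.Adj a c := by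
        rcases hx with rfl | rfl
        · exact (adj_ll G).mp h
        · exact ((adj_rl G).mp h).symm
      exact ⟨Walk.cons hadj q, by simp [hq]⟩
    · obtain ⟨q, hq⟩ := ih hwp (Or.inr rfl) hy
      have hadj : G.Adj a c := by
        rcases hx with rfl | rfl
        · exact (adj_lr G).mp h
        · exact ((adj_rr G) h).elim
      exact ⟨Walk.cons hadj q, by simp [hq]⟩

lemma length_through {x y : V ⊕ V ⊕ Unit} (p : (mycielskian G).Walk x y)
    (hw : wv ∈ p.support) :
    (mycielskian G).dist x wv + (mycielskian G).dist wv y ≤ p.length := by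
  classical
  have h1 := SimpleGraph.dist_le (p.takeUntil wv hw)
  have h2 := SimpleGraph.dist_le (p.dropUntil wv hw)
  have h3 : (p.takeUntil wv hw).length + (p.dropUntil wv hw).length = p.length := by
    rw [← Walk.length_append, p.take_spec hw]
  omega

variable [Fintype V]

lemma dist_uw (a : V) : (mycielskian G).dist (Sum.inr (Sum.inl a)) wv = 1 :=
  dist_eq_one_iff_adj.mpr (adj_uw G a)

lemma dist_lw (hc : G.Connected) (h2 : 2 ≤ Fintype.card V) (a : V) :
    (mycielskian G).dist (Sum.inl a) wv = 2 := by
  have hμ := myc_connected G hc h2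
  obtain ⟨b, hb⟩ := exists_adj G hc h2 a
  have hu : (mycielskian G).dist (Sum.inl a) wv ≤ 2 := by
    simpa using SimpleGraph.dist_le
      (Walk.cons ((adj_lr G).mpr hb) (Walk.cons (adj_uw G b) Walk.nil))
  have h0 : 0 < (mycielskian G).dist (Sum.inl a) wv := hμ.pos_dist_of_ne (by simp)
  have h1 : (mycielskian G).dist (Sum.inl a) wv ≠ 1 :=
    fun h => not_adj_lw G a (dist_eq_one_iff_adj.mp h)
  omega

lemma dist_ll (hc : G.Connected) (h2 : 2 ≤ Fintype.card V) (a b : V) :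
    (mycielskian G).dist (Sum.inl a) (Sum.inl b) = min (G.dist a b) 4 := by
  classical
  rcases eq_or_ne a b with rfl | hab
  · simp [SimpleGraph.dist_self]
  have hμ := myc_connected G hc h2
  obtain ⟨p, hp⟩ := hc.exists_walk_length_eq_dist a b
  have hu1 : (mycielskian G).dist (Sum.inl a) (Sum.inl b) ≤ G.dist a b := by
    have := SimpleGraph.dist_le (liftWalk G p)
    rwa [liftWalk_length, hp] at this
  obtain ⟨a', ha'⟩ := exists_adj G hc h2 a
  obtain ⟨b', hb'⟩ := exists_adj G hc h2 b
  have hu2 : (mycielskian G).dist (Sum.inl a) (Sum.inl b) ≤ 4 := by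
    simpa using SimpleGraph.dist_le
      (Walk.cons ((adj_lr G).mpr ha') (Walk.cons (adj_uw G a')
        (Walk.cons (adj_wu G b') (Walk.cons ((adj_rl G).mpr hb') Walk.nil))))
  obtain ⟨q, hq⟩ := hμ.exists_walk_length_eq_dist (Sum.inl a) (Sum.inl b)
  have hlow : min (G.dist a b) 4 ≤ (mycielskian G).dist (Sum.inl a) (Sum.inl b) := by
    rcases Classical.em (wv ∈ q.support) with hwq | hwq
    · have h4 := length_through G q hwq
      rw [dist_lw G hc h2 a, SimpleGraph.dist_comm, dist_lw G hc h2 b] at h4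
      omega
    · obtain ⟨r, hr⟩ := proj_walk G q hwq (Or.inl rfl) (Or.inl rfl)
      have := SimpleGraph.dist_le r
      omega
  exact le_antisymm (le_min hu1 hu2) hlow

lemma dist_rl_ne (hc : G.Connected) (h2 : 2 ≤ Fintype.card V) {a b : V} (hab : a ≠ b) :
    (mycielskian G).dist (Sum.inr (Sum.inl a)) (Sum.inl b) = min (G.dist a b) 3 := by
  classical
  have hμ := myc_connected G hc h2
  obtain ⟨p, hp⟩ := hc.exists_walk_length_eq_dist a b
  have hd0 : G.dist a b ≠ 0 := (hc.pos_dist_of_ne hab).ne'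
  obtain ⟨q0, hq0⟩ := exists_mixwalk G p (by omega)
  have hu1 : (mycielskian G).dist (Sum.inr (Sum.inl a)) (Sum.inl b) ≤ G.dist a b := by
    have := SimpleGraph.dist_le q0
    omega
  obtain ⟨b', hb'⟩ := exists_adj G hc h2 b
  have hu2 : (mycielskian G).dist (Sum.inr (Sum.inl a)) (Sum.inl b) ≤ 3 := by
    simpa using SimpleGraph.dist_le
      (Walk.cons (adj_uw G a) (Walk.cons (adj_wu G b')
        (Walk.cons ((adj_rl G).mpr hb') Walk.nil)))
  obtain ⟨q, hq⟩ := hμ.exists_walk_length_eq_dist (Sum.inr (Sum.inl a)) (Sum.inl b)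
  have hlow : min (G.dist a b) 3 ≤ (mycielskian G).dist (Sum.inr (Sum.inl a)) (Sum.inl b) := by
    rcases Classical.em (wv ∈ q.support) with hwq | hwq
    · have h4 := length_through G q hwq
      rw [dist_uw, SimpleGraph.dist_comm, dist_lw G hc h2 b] at h4
      omega
    · obtain ⟨r, hr⟩ := proj_walk G q hwq (Or.inr rfl) (Or.inl rfl)
      have := SimpleGraph.dist_le r
      omega
  exact le_antisymm (le_min hu1 hu2) hlow

lemma dist_rl_self (hc : G.Connected) (h2 : 2 ≤ Fintype.card V) (a : V) :
    (mycielskian G).dist (Sum.inr (Sum.inl a)) (Sum.inl a) = 2 := by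
  have hμ := myc_connected G hc h2
  obtain ⟨k, hk⟩ := exists_adj G hc h2 a
  have hu : (mycielskian G).dist (Sum.inr (Sum.inl a)) (Sum.inl a) ≤ 2 := by
    simpa using SimpleGraph.dist_le
      (Walk.cons ((adj_rl G).mpr hk.symm) (Walk.cons ((adj_ll G).mpr hk.symm) Walk.nil))
  have h0 : 0 < (mycielskian G).dist (Sum.inr (Sum.inl a)) (Sum.inl a) :=
    hμ.pos_dist_of_ne (by simp)
  have h1 : (mycielskian G).dist (Sum.inr (Sum.inl a)) (Sum.inl a) ≠ 1 := by
    intro h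
    exact (G.loopless.irrefl a) ((adj_rl G).mp (dist_eq_one_iff_adj.mp h))
  omega

lemma dist_rr (hc : G.Connected) (h2 : 2 ≤ Fintype.card V) {a b : V} (hab : a ≠ b) :
    (mycielskian G).dist (Sum.inr (Sum.inl a)) (Sum.inr (Sum.inl b)) = 2 := by
  have hμ := myc_connected G hc h2
  have hu : (mycielskian G).dist (Sum.inr (Sum.inl a)) (Sum.inr (Sum.inl b)) ≤ 2 := by
    simpa using SimpleGraph.dist_le
      (Walk.cons (adj_uw G a) (Walk.cons (adj_wu G b) Walk.nil))
  have h0 : 0 < (mycielskian G).dist (Sum.inr (Sum.inl a)) (Sum.inr (Sum.inl b)) :=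
    hμ.pos_dist_of_ne (by simp [hab])
  have h1 : (mycielskian G).dist (Sum.inr (Sum.inl a)) (Sum.inr (Sum.inl b)) ≠ 1 :=
    fun h => adj_rr G (dist_eq_one_iff_adj.mp h)
  omega


noncomputable def dval (G : SimpleGraph V) [DecidableEq V] :
    (V ⊕ V ⊕ Unit) → (V ⊕ V ⊕ Unit) → ℕ
  | Sum.inl a, Sum.inl b => min (G.dist a b) 4
  | Sum.inl a, Sum.inr (Sum.inl b) => if a = b then 2 else min (G.dist a b) 3
  | Sum.inl _, Sum.inr (Sum.inr _) => 2
  | Sum.inr (Sum.inl a), Sum.inl b => if a = b then 2 else min (G.dist a b) 3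
  | Sum.inr (Sum.inl a), Sum.inr (Sum.inl b) => if a = b then 0 else 2
  | Sum.inr (Sum.inl _), Sum.inr (Sum.inr _) => 1
  | Sum.inr (Sum.inr _), Sum.inl _ => 2
  | Sum.inr (Sum.inr _), Sum.inr (Sum.inl _) => 1
  | Sum.inr (Sum.inr _), Sum.inr (Sum.inr _) => 0

lemma dist_eq_dval [DecidableEq V] (hc : G.Connected) (h2 : 2 ≤ Fintype.card V) :
    ∀ x y, (mycielskian G).dist x y = dval G x y := by
  rintro (a | a | u) (b | b | u')
  · exact dist_ll G hc h2 a b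
  · show _ = if a = b then 2 else min (G.dist a b) 3
    rcases eq_or_ne a b with rfl | hab
    · rw [SimpleGraph.dist_comm, dist_rl_self G hc h2 a, if_pos rfl]
    · rw [SimpleGraph.dist_comm, dist_rl_ne G hc h2 hab.symm, if_neg hab,
        SimpleGraph.dist_comm]
  · cases u'
    exact dist_lw G hc h2 a
  · show _ = if a = b then 2 else min (G.dist a b) 3
    rcases eq_or_ne a b with rfl | hab
    · rw [dist_rl_self G hc h2 a, if_pos rfl]
    · rw [dist_rl_ne G hc h2 hab, if_neg hab]
  · show _ = if a = b then 0 else 2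
    rcases eq_or_ne a b with rfl | hab
    · rw [SimpleGraph.dist_self, if_pos rfl]
    · rw [dist_rr G hc h2 hab, if_neg hab]
  · cases u'
    exact dist_uw G a
  · cases u
    rw [SimpleGraph.dist_comm]
    exact dist_lw G hc h2 b
  · cases u
    rw [SimpleGraph.dist_comm]
    exact dist_uw G b
  · cases u; cases u'
    exact SimpleGraph.dist_self

end MycAux

open MycAux

/-- For a connected graph `G` with `n ≥ 2` vertices and `m` edges, with
`a_k = d(G,k)`, the counts `b_k = d(μ(G),k)` satisfy `b₁ = 3m+n`,
`b₂ = (n²+3n)/2 + 3a₂`, `b₃ = n² - 2m - n + a₃ - 2a₂`, `b₄ = n(n-1)/2 - m - a₂ - a₃`,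
and `b_k = 0` for `k ≥ 5`. -/
theorem stmt_7 {V : Type*} [Fintype V] (G : SimpleGraph V) (n m : ℕ)
    (hn : Fintype.card V = n) (hn2 : 2 ≤ n) (hm : Nat.card G.edgeSet = m)
    (hc : G.Connected) :
    distCount (mycielskian G) 1 = 3 * m + n ∧
    (distCount (mycielskian G) 2 : ℚ) =
      ((n : ℚ) ^ 2 + 3 * n) / 2 + 3 * distCount G 2 ∧
    (distCount (mycielskian G) 3 : ℚ) =
      (n : ℚ) ^ 2 - 2 * m - n + distCount G 3 - 2 * distCount G 2 ∧
    (distCount (mycielskian G) 4 : ℚ) =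
      (n : ℚ) * ((n : ℚ) - 1) / 2 - m - distCount G 2 - distCount G 3 ∧
    ∀ k : ℕ, 5 ≤ k → distCount (mycielskian G) k = 0 := by
  classical
  have h2V : 2 ≤ Fintype.card V := hn ▸ hn2
  have hdv := dist_eq_dval G hc h2V
  have hμkey : ∀ k : ℕ,
      2 * distCount (mycielskian G) k
        = ∑ x : V ⊕ V ⊕ Unit, ∑ y : V ⊕ V ⊕ Unit,
            if x ≠ y ∧ (mycielskian G).dist x y = k then 1 else 0 := by
    intro k
    rw [← nat_card_pairs_eq_sum (fun x y => x ≠ y ∧ (mycielskian G).dist x y = k)]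
    exact (two_mul_sym2_card (mycielskian G).dist
      (fun _ _ => SimpleGraph.dist_comm) k).symm
  have hGkey : ∀ k : ℕ,
      (∑ a : V, ∑ b : V, if ¬a = b ∧ G.dist a b = k then 1 else 0)
        = 2 * distCount G k := by
    intro k
    rw [← nat_card_pairs_eq_sum (fun a b => ¬a = b ∧ G.dist a b = k)]
    exact two_mul_sym2_card G.dist (fun _ _ => SimpleGraph.dist_comm) k
  have ha1 : distCount G 1 = m := by
    rw [← hm]
    apply Nat.card_congr
    apply Equiv.subtypeEquivRight
    intro e
    induction e using Sym2.ind with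
    | _ a b =>
      simp only [Sym2.mk_isDiag_iff, Sym2.lift_mk, SimpleGraph.mem_edgeSet]
      constructor
      · rintro ⟨-, h2⟩
        exact SimpleGraph.dist_eq_one_iff_adj.mp h2
      · intro h
        exact ⟨h.ne, SimpleGraph.dist_eq_one_iff_adj.mpr h⟩
  have hdiag : ∀ a : V, (∑ b : V, if a = b then (1:ℕ) else 0) = 1 := by
    intro a; simp
  have hrow : ∀ a : V, (∑ b : V, if ¬a = b then (1:ℕ) else 0) + 1 = n := by
    intro a
    rw [← hdiag a, ← Finset.sum_add_distrib]
    rw [Finset.sum_congr rfl (g := fun _ => 1) (fun b _ => by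
      by_cases h : a = b <;> simp [h])]
    simp [Finset.card_univ, hn]
  have hT : (∑ a : V, ∑ b : V, if ¬a = b then (1:ℕ) else 0) + n = n * n := by
    have h2 : (∑ a : V, ((∑ b : V, if ¬a = b then (1:ℕ) else 0) + 1)) = n * n := by
      rw [Finset.sum_congr rfl (g := fun _ => n) (fun a _ => hrow a)]
      simp [Finset.card_univ, hn]
    rw [Finset.sum_add_distrib] at h2
    simpa [Finset.card_univ, hn] using h2
  have hp1 : (∑ a : V, ∑ b : V, if ¬a = b then (1:ℕ) else 0)
      = (∑ a : V, ∑ b : V, if ¬a = b ∧ G.dist a b = 1 then 1 else 0)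
      + (∑ a : V, ∑ b : V, if ¬a = b ∧ G.dist a b = 2 then 1 else 0)
      + (∑ a : V, ∑ b : V, if ¬a = b ∧ 3 ≤ G.dist a b then 1 else 0) := by
    rw [← Finset.sum_add_distrib, ← Finset.sum_add_distrib]
    refine Finset.sum_congr rfl fun a _ => ?_
    rw [← Finset.sum_add_distrib, ← Finset.sum_add_distrib]
    refine Finset.sum_congr rfl fun b _ => ?_
    rcases eq_or_ne a b with rfl | hab
    · simp
    · have hd := hc.pos_dist_of_ne hab
      simp only [hab, not_false_iff, true_and, if_true]
      split_ifs <;> omega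
  have hp2 : (∑ a : V, ∑ b : V, if ¬a = b ∧ 3 ≤ G.dist a b then (1:ℕ) else 0)
      = (∑ a : V, ∑ b : V, if ¬a = b ∧ G.dist a b = 3 then 1 else 0)
      + (∑ a : V, ∑ b : V, if ¬a = b ∧ 4 ≤ G.dist a b then 1 else 0) := by
    rw [← Finset.sum_add_distrib]
    refine Finset.sum_congr rfl fun a _ => ?_
    rw [← Finset.sum_add_distrib]
    refine Finset.sum_congr rfl fun b _ => ?_
    rcases eq_or_ne a b with rfl | hab
    · simp
    · simp only [hab, not_false_iff, true_and]
      split_ifs <;> omega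
  -- k = 1
  have hb1 : 2 * distCount (mycielskian G) 1 = 6 * m + 2 * n := by
    have h := hμkey 1
    simp only [hdv, Fintype.sum_sum_type, Fintype.sum_unique, dval, ne_eq, Sum.inl.injEq,
      Sum.inr.injEq, reduceCtorEq, not_false_eq_true, true_and] at h
    have e1 : ∀ a b : V, (¬a = b ∧ G.dist a b ⊓ 4 = 1) ↔ (¬a = b ∧ G.dist a b = 1) := by
      intro a b; constructor <;> (rintro ⟨h1, h2⟩; exact ⟨h1, by omega⟩)
    have e2 : ∀ a b : V, ((if a = b then 2 else G.dist a b ⊓ 3) = 1)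
        ↔ (¬a = b ∧ G.dist a b = 1) := by
      intro a b
      rcases eq_or_ne a b with rfl | hab
      · simp
      · rw [if_neg hab]
        constructor
        · intro h2; exact ⟨hab, by omega⟩
        · rintro ⟨-, h2⟩; omega
    have e3 : ∀ a b : V, (¬a = b ∧ (if a = b then 0 else 2) = 1) ↔ False := by
      intro a b
      rcases eq_or_ne a b with rfl | hab
      · simp
      · rw [if_neg hab]; simp [hab]
    simp only [e1, e2, e3, if_false, if_true, not_true, false_and, and_false,
      Finset.sum_const_zero, Finset.sum_add_distrib, Finset.sum_const, Finset.card_univ, hn,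
      smul_eq_mul, mul_one, mul_zero, add_zero, zero_add,
      show (if (2:ℕ) = 1 then (1:ℕ) else 0) = 0 from rfl] at h
    have hg := hGkey 1
    omega
  -- k = 2
  have hb2 : 2 * distCount (mycielskian G) 2 = 6 * distCount G 2 + n * n + 3 * n := by
    have h := hμkey 2
    simp only [hdv, Fintype.sum_sum_type, Fintype.sum_unique, dval, ne_eq, Sum.inl.injEq,
      Sum.inr.injEq, reduceCtorEq, not_false_eq_true, true_and] at h
    have e1 : ∀ a b : V, (¬a = b ∧ G.dist a b ⊓ 4 = 2) ↔ (¬a = b ∧ G.dist a b = 2) := by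
      intro a b; constructor <;> (rintro ⟨h1, h2⟩; exact ⟨h1, by omega⟩)
    have e2 : ∀ a b : V, (if (if a = b then 2 else G.dist a b ⊓ 3) = 2 then (1:ℕ) else 0)
        = (if a = b then 1 else 0) + (if ¬a = b ∧ G.dist a b = 2 then 1 else 0) := by
      intro a b
      rcases eq_or_ne a b with rfl | hab
      · simp
      · have hiff : (¬a = b ∧ G.dist a b = 2) ↔ (G.dist a b = 2) := by simp [hab]
        simp only [if_neg hab, hiff, zero_add]
        split_ifs <;> omega
    have e3 : ∀ a b : V, (¬a = b ∧ (if a = b then 0 else 2) = 2) ↔ (¬a = b) := by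
      intro a b
      rcases eq_or_ne a b with rfl | hab
      · simp
      · rw [if_neg hab]; simp [hab]
    simp only [e1, e2, e3, hdiag, if_false, if_true, not_true, false_and, and_false,
      Finset.sum_const_zero, Finset.sum_add_distrib, Finset.sum_const, Finset.card_univ, hn,
      smul_eq_mul, mul_one, mul_zero, add_zero, zero_add,
      show (if (2:ℕ) = 2 then (1:ℕ) else 0) = 1 from rfl,
      show (if (1:ℕ) = 2 then (1:ℕ) else 0) = 0 from rfl] at h
    have hg := hGkey 2
    omega
  -- k = 3
  have hb3 : 2 * distCount (mycielskian G) 3 + 4 * m + 4 * distCount G 2 + 2 * n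
      = 2 * distCount G 3 + 2 * (n * n) := by
    have h := hμkey 3
    simp only [hdv, Fintype.sum_sum_type, Fintype.sum_unique, dval, ne_eq, Sum.inl.injEq,
      Sum.inr.injEq, reduceCtorEq, not_false_eq_true, true_and] at h
    have e1 : ∀ a b : V, (¬a = b ∧ G.dist a b ⊓ 4 = 3) ↔ (¬a = b ∧ G.dist a b = 3) := by
      intro a b; constructor <;> (rintro ⟨h1, h2⟩; exact ⟨h1, by omega⟩)
    have e2 : ∀ a b : V, ((if a = b then 2 else G.dist a b ⊓ 3) = 3)
        ↔ (¬a = b ∧ 3 ≤ G.dist a b) := by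
      intro a b
      rcases eq_or_ne a b with rfl | hab
      · simp
      · rw [if_neg hab]
        constructor
        · intro h2; exact ⟨hab, by omega⟩
        · rintro ⟨-, h2⟩; omega
    have e3 : ∀ a b : V, (¬a = b ∧ (if a = b then 0 else 2) = 3) ↔ False := by
      intro a b
      rcases eq_or_ne a b with rfl | hab
      · simp
      · rw [if_neg hab]; simp [hab]
    simp only [e1, e2, e3, if_false, if_true, not_true, false_and, and_false,
      Finset.sum_const_zero, Finset.sum_add_distrib, Finset.sum_const, Finset.card_univ, hn,
      smul_eq_mul, mul_one, mul_zero, add_zero, zero_add,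
      show (if (2:ℕ) = 3 then (1:ℕ) else 0) = 0 from rfl,
      show (if (1:ℕ) = 3 then (1:ℕ) else 0) = 0 from rfl] at h
    have hg1 := hGkey 1
    have hg2 := hGkey 2
    have hg3 := hGkey 3
    omega
  -- k = 4
  have hb4 : 2 * distCount (mycielskian G) 4 + 2 * m + 2 * distCount G 2
      + 2 * distCount G 3 + n = n * n := by
    have h := hμkey 4
    simp only [hdv, Fintype.sum_sum_type, Fintype.sum_unique, dval, ne_eq, Sum.inl.injEq,
      Sum.inr.injEq, reduceCtorEq, not_false_eq_true, true_and] at h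
    have e1 : ∀ a b : V, (¬a = b ∧ G.dist a b ⊓ 4 = 4) ↔ (¬a = b ∧ 4 ≤ G.dist a b) := by
      intro a b; constructor <;> (rintro ⟨h1, h2⟩; exact ⟨h1, by omega⟩)
    have e2 : ∀ a b : V, ((if a = b then 2 else G.dist a b ⊓ 3) = 4) ↔ False := by
      intro a b
      rcases eq_or_ne a b with rfl | hab
      · simp
      · rw [if_neg hab]
        simp only [iff_false]
        omega
    have e3 : ∀ a b : V, (¬a = b ∧ (if a = b then 0 else 2) = 4) ↔ False := by
      intro a b
      rcases eq_or_ne a b with rfl | hab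
      · simp
      · rw [if_neg hab]; simp [hab]
    simp only [e1, e2, e3, if_false, if_true, not_true, false_and, and_false,
      Finset.sum_const_zero, Finset.sum_add_distrib, Finset.sum_const, Finset.card_univ, hn,
      smul_eq_mul, mul_one, mul_zero, add_zero, zero_add,
      show (if (2:ℕ) = 4 then (1:ℕ) else 0) = 0 from rfl,
      show (if (1:ℕ) = 4 then (1:ℕ) else 0) = 0 from rfl] at h
    have hg1 := hGkey 1
    have hg2 := hGkey 2
    have hg3 := hGkey 3
    omega
  refine ⟨by omega, ?_, ?_, ?_, ?_⟩
  · have := congrArg (Nat.cast : ℕ → ℚ) hb2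
    push_cast at this
    linarith
  · have := congrArg (Nat.cast : ℕ → ℚ) hb3
    push_cast at this
    linarith
  · have := congrArg (Nat.cast : ℕ → ℚ) hb4
    push_cast at this
    linarith
  · intro k hk
    have h := hμkey k
    simp only [hdv, Fintype.sum_sum_type, Fintype.sum_unique, dval, ne_eq, Sum.inl.injEq,
      Sum.inr.injEq, reduceCtorEq, not_false_eq_true, true_and] at h
    have e1 : ∀ a b : V, (¬a = b ∧ G.dist a b ⊓ 4 = k) ↔ False := by
      intro a b; simp only [iff_false, not_and]; intro _; omega
    have e2 : ∀ a b : V, ((if a = b then 2 else G.dist a b ⊓ 3) = k) ↔ False := by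
      intro a b
      rcases eq_or_ne a b with rfl | hab
      · rw [if_pos rfl]; simp only [iff_false]; omega
      · rw [if_neg hab]; simp only [iff_false]; omega
    have e3 : ∀ a b : V, (¬a = b ∧ (if a = b then 0 else 2) = k) ↔ False := by
      intro a b
      rcases eq_or_ne a b with rfl | hab
      · simp
      · rw [if_neg hab]; simp only [hab, not_false_iff, true_and, iff_false]; omega
    have e4 : ((2:ℕ) = k) ↔ False := by simp only [iff_false]; omega
    have e5 : ((1:ℕ) = k) ↔ False := by simp only [iff_false]; omega
    simp only [e1, e2, e3, e4, e5, if_false, not_true, false_and, and_false,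
      Finset.sum_const_zero, add_zero, zero_add] at h
    omega
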